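/- Let f : ℝⁿ → ℝⁿ be C¹, Φ the flow of x' = f(x), and suppose for all x in the reachable tube from X_in over [0,1] the vector (1/2)·Df(x)(f(x)) lies in a convex set C. Then for every u ∈ X_in, Φ(1,u) ∈ {u + f(u)} + C; consequently if {u + f(u) : u ∈ X_in} + C ⊆ X_s, the neural ODE satisfies the safety property {Φ(1,u) : u ∈ X_in} ⊆ X_s. -/

import Mathlib

open Pointwise

lemma aux_isCompact_convexHull {n : ℕ} {K : Set (Fin n → ℝ)} (hK : IsCompact K) :
    IsCompact (convexHull ℝ K) := by
  rcases K.eq_empty_or_nonempty with rfl | ⟨k₀, hk₀⟩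
  · simp
  · set S : Set ((Fin (n+1) → ℝ) × (Fin (n+1) → Fin n → ℝ)) :=
      (stdSimplex ℝ (Fin (n+1))) ×ˢ (Set.univ.pi fun _ : Fin (n+1) => K) with hSdef
    have hS : IsCompact S :=
      IsCompact.prod (isCompact_stdSimplex ℝ (Fin (n+1))) (isCompact_univ_pi fun _ => hK)
    have hcont : Continuous fun p : (Fin (n+1) → ℝ) × (Fin (n+1) → Fin n → ℝ) =>
        ∑ i, p.1 i • p.2 i := by
      apply continuous_finset_sum
      intro i _
      exact ((continuous_apply i).comp continuous_fst).smul
        ((continuous_apply i).comp continuous_snd)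
    have himg : (fun p : (Fin (n+1) → ℝ) × (Fin (n+1) → Fin n → ℝ) =>
        ∑ i, p.1 i • p.2 i) '' S = convexHull ℝ K := by
      apply Set.Subset.antisymm
      · rintro _ ⟨⟨w, v⟩, ⟨hw, hv⟩, rfl⟩
        exact (convex_convexHull ℝ K).sum_mem (fun i _ => hw.1 i) hw.2
          fun i _ => subset_convexHull ℝ K (hv i trivial)
      · intro x hx
        obtain ⟨ι, hι, z, w, hzs, hai, hwpos, hwsum, hxeq⟩ :=
          eq_pos_convex_span_of_mem_convexHull hx
        have hcard : Fintype.card ι ≤ Fintype.card (Fin (n+1)) := by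
          have h1 := hai.card_le_finrank_succ
          have h2 := Submodule.finrank_le (vectorSpan ℝ (Set.range z))
          simp only [Module.finrank_fin_fun] at h2
          simp only [Fintype.card_fin]
          omega
        obtain ⟨e⟩ := Function.Embedding.nonempty_of_card_le hcard
        have w' : Fin (n+1) → ℝ := Function.extend e w (fun _ => (0:ℝ))
        set w' : Fin (n+1) → ℝ := Function.extend e w (fun _ => (0:ℝ)) with hw'def
        set z' : Fin (n+1) → (Fin n → ℝ) := Function.extend e z (fun _ => k₀) with hz'def
        have hw'app : ∀ i, w' (e i) = w i := fun i => e.injective.extend_apply w _ i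
        have hz'app : ∀ i, z' (e i) = z i := fun i => e.injective.extend_apply z _ i
        have hw'0 : ∀ j, (¬ ∃ i, e i = j) → w' j = 0 := fun j hj =>
          Function.extend_apply' w _ j hj
        have key : ∀ (M : Type) [AddCommMonoid M], ∀ (G : Fin (n+1) → M),
            (∀ j, (¬ ∃ i, e i = j) → G j = 0) → ∑ j, G j = ∑ i, G (e i) := by
          intro M _ G hG
          rw [← Finset.sum_image (fun a _ b _ h => e.injective h)]
          apply (Finset.sum_subset (Finset.subset_univ _) _).symm
          intro j _ hj
          apply hG
          intro ⟨i, hi⟩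
          exact hj (Finset.mem_image.2 ⟨i, Finset.mem_univ i, hi⟩)
        have hstd : w' ∈ stdSimplex ℝ (Fin (n+1)) := by
          constructor
          · intro j
            by_cases hj : ∃ i, e i = j
            · obtain ⟨i, rfl⟩ := hj
              rw [hw'app]
              exact (hwpos i).le
            · rw [hw'0 j hj]
          · rw [key ℝ w' hw'0]
            simp only [hw'app]
            exact hwsum
        have hpi : z' ∈ Set.univ.pi (fun _ : Fin (n+1) => K) := by
          intro j _
          by_cases hj : ∃ i, e i = j
          · obtain ⟨i, rfl⟩ := hj
            rw [hz'app]
            exact hzs ⟨i, rfl⟩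
          · rw [hz'def, Function.extend_apply' z _ j hj]
            exact hk₀
        have hsum : ∑ j, w' j • z' j = x := by
          rw [key _ (fun j => w' j • z' j) (fun j hj => by show w' j • z' j = 0; rw [hw'0 j hj, zero_smul])]
          simp only [hw'app, hz'app]
          exact hxeq
        exact ⟨(w', z'), ⟨hstd, hpi⟩, hsum⟩
    rw [← himg]
    exact hS.image hcont

open MeasureTheory

/-- Combination of the Lagrange-remainder error characterization with
Algorithm 1: if ½·Df(x)(f(x)) lies in a convex set C on the reachable tube,
then Φ(1,u) ∈ {u + f(u)} + C, and safety of the ResNet outputs expanded by C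
implies safety of the neural ODE outputs. -/
theorem stmt_19 (n : ℕ) (f : (Fin n → ℝ) → (Fin n → ℝ))
    (Φ : ℝ → (Fin n → ℝ) → (Fin n → ℝ)) (Xin Xs C : Set (Fin n → ℝ))
    (hf : ContDiff ℝ 1 f)
    (hC : Convex ℝ C)
    (hΦ0 : ∀ u ∈ Xin, Φ 0 u = u)
    (hΦC2 : ∀ u ∈ Xin, ContDiffOn ℝ 2 (fun t => Φ t u) (Set.Icc (0:ℝ) 1))
    (hode : ∀ u ∈ Xin, ∀ t ∈ Set.Icc (0:ℝ) 1, HasDerivAt (fun s => Φ s u) (f (Φ t u)) t)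
    (herr : ∀ u ∈ Xin, ∀ t ∈ Set.Icc (0:ℝ) 1,
      (1/2 : ℝ) • fderiv ℝ f (Φ t u) (f (Φ t u)) ∈ C) :
    (∀ u ∈ Xin, Φ 1 u ∈ ({u + f u} : Set (Fin n → ℝ)) + C) ∧
    ({y : Fin n → ℝ | ∃ u ∈ Xin, y = u + f u} + C ⊆ Xs →
      {y : Fin n → ℝ | ∃ u ∈ Xin, y = Φ 1 u} ⊆ Xs) := by
  have main : ∀ u ∈ Xin, Φ 1 u ∈ ({u + f u} : Set (Fin n → ℝ)) + C := by
    intro u hu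
    set g : ℝ → (Fin n → ℝ) := fun t => Φ t u with hgdef
    set g'' : ℝ → (Fin n → ℝ) := fun t => fderiv ℝ f (g t) (f (g t)) with hg''def
    have hgderiv : ∀ t ∈ Set.Icc (0:ℝ) 1, HasDerivAt g (f (g t)) t := hode u hu
    have hgcont : ContinuousOn g (Set.Icc (0:ℝ) 1) := (hΦC2 u hu).continuousOn
    have hg''cont : ContinuousOn g'' (Set.Icc (0:ℝ) 1) := by
      have h1 : Continuous (fderiv ℝ f) := hf.continuous_fderiv one_ne_zero
      exact (h1.comp_continuousOn hgcont).clm_apply (hf.continuous.comp_continuousOn hgcont)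
    -- Taylor with integral remainder via FTC applied to F s = g s + (1-s) • f (g s)
    have hFderiv : ∀ t ∈ Set.uIcc (0:ℝ) 1,
        HasDerivAt (fun s => g s + (1 - s) • f (g s)) ((1 - t) • g'' t) t := by
      intro t ht
      rw [Set.uIcc_of_le zero_le_one] at ht
      have h1 := hgderiv t ht
      have h2 : HasDerivAt (fun s => f (g s)) (g'' t) t := by
        have h3 : HasFDerivAt f (fderiv ℝ f (g t)) (g t) :=
          (hf.differentiable one_ne_zero (g t)).hasFDerivAt
        exact h3.comp_hasDerivAt t h1
      have h4 : HasDerivAt (fun s : ℝ => (1 - s)) (-1 : ℝ) t := by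
        simpa using (hasDerivAt_id t).const_sub (1:ℝ)
      have h6 := h1.add (h4.smul h2)
      exact h6.congr_deriv (by simp only [neg_smul, one_smul]; abel)
    have hIF : IntervalIntegrable (fun t => (1 - t) • g'' t) volume 0 1 := by
      apply ContinuousOn.intervalIntegrable
      rw [Set.uIcc_of_le zero_le_one]
      exact (continuousOn_const.sub continuousOn_id).smul hg''cont
    have hFTC := intervalIntegral.integral_eq_sub_of_hasDerivAt hFderiv hIF
    have hI : Φ 1 u = (u + f u) + ∫ t in (0:ℝ)..1, (1 - t) • g'' t := by
      rw [hFTC]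
      have hg0 : g 0 = u := hΦ0 u hu
      have hg1 : g 1 = Φ 1 u := rfl
      rw [hg0, hg1]
      simp
    -- the convex compact hull
    set K : Set (Fin n → ℝ) := (fun t => (1/2 : ℝ) • g'' t) '' Set.Icc (0:ℝ) 1 with hKdef
    have hKcomp : IsCompact K :=
      isCompact_Icc.image_of_continuousOn ((continuousOn_const (c := (1/2:ℝ))).smul hg''cont)
    have hD : IsCompact (convexHull ℝ K) := aux_isCompact_convexHull hKcomp
    have hDC : convexHull ℝ K ⊆ C := by
      apply convexHull_min _ hC
      rintro _ ⟨t, ht, rfl⟩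
      exact herr u hu t ht
    -- the weighted probability measure
    set ρ : ℝ → NNReal := fun t => Real.toNNReal (2 * (1 - t)) with hρdef
    have hρmeas : Measurable ρ :=
      (measurable_const.mul (measurable_const.sub measurable_id)).real_toNNReal
    set μ : Measure ℝ :=
      (volume.restrict (Set.Icc (0:ℝ) 1)).withDensity (fun t => (ρ t : ENNReal)) with hμdef
    have hnn : ∀ t ∈ Set.Icc (0:ℝ) 1, 0 ≤ 2 * (1 - t) := by
      intro t ht
      nlinarith [ht.2]
    have hval : ∫ t in Set.Icc (0:ℝ) 1, 2 * (1 - t) = 1 := by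
      rw [MeasureTheory.integral_Icc_eq_integral_Ioc, ← intervalIntegral.integral_of_le zero_le_one]
      have h7 : ∀ t : ℝ, 2 * (1 - t) = 2 - 2 * t := fun t => by ring
      simp_rw [h7]
      rw [intervalIntegral.integral_sub intervalIntegrable_const
        (show IntervalIntegrable (fun x : ℝ => 2 * x) volume 0 1 from
          (continuous_const.mul continuous_id').intervalIntegrable 0 1),
        intervalIntegral.integral_const_mul, integral_id]
      norm_num
    have hdensint : IntegrableOn (fun t => 2 * (1 - t)) (Set.Icc (0:ℝ) 1) :=
      (continuous_const.mul (continuous_const.sub continuous_id')).continuousOn.integrableOn_Icc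
    have hprob : IsProbabilityMeasure μ := by
      constructor
      rw [hμdef, MeasureTheory.withDensity_apply _ MeasurableSet.univ, Measure.restrict_univ]
      have hcoe : ∀ t : ℝ, ((ρ t : ENNReal)) = ENNReal.ofReal (2 * (1 - t)) := fun t => rfl
      simp_rw [hcoe]
      rw [← MeasureTheory.ofReal_integral_eq_lintegral_ofReal hdensint
        ((ae_restrict_iff' measurableSet_Icc).2 (Filter.Eventually.of_forall hnn))]
      rw [hval]
      norm_num
    have hac : μ ≪ volume.restrict (Set.Icc (0:ℝ) 1) :=
      MeasureTheory.withDensity_absolutelyContinuous _ _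
    have hmem_ae : ∀ᵐ t ∂μ, (1/2 : ℝ) • g'' t ∈ convexHull ℝ K := by
      have h1 : ∀ᵐ t ∂(volume.restrict (Set.Icc (0:ℝ) 1)), t ∈ Set.Icc (0:ℝ) 1 :=
        ae_restrict_mem measurableSet_Icc
      have h2 : ∀ᵐ t ∂μ, t ∈ Set.Icc (0:ℝ) 1 := hac.ae_le h1
      exact h2.mono fun t ht => subset_convexHull ℝ K ⟨t, ht, rfl⟩
    have heqon : Set.EqOn (fun t => ρ t • ((1/2 : ℝ) • g'' t)) (fun t => (1 - t) • g'' t)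
        (Set.Icc (0:ℝ) 1) := by
      intro t ht
      have h8 : ((ρ t : ℝ)) = 2 * (1 - t) := Real.coe_toNNReal _ (hnn t ht)
      show ρ t • ((1/2 : ℝ) • g'' t) = (1 - t) • g'' t
      rw [NNReal.smul_def, h8, smul_smul]
      congr 1
      ring
    have hint : Integrable (fun t => (1/2 : ℝ) • g'' t) μ := by
      rw [hμdef, integrable_withDensity_iff_integrable_smul hρmeas]
      have h9 : IntegrableOn (fun t => (1 - t) • g'' t) (Set.Icc (0:ℝ) 1) :=
        ((continuousOn_const.sub continuousOn_id).smul hg''cont).integrableOn_Icc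
      exact (MeasureTheory.IntegrableOn.congr_fun h9 heqon.symm measurableSet_Icc : _)
    have hIeq : ∫ t, (1/2 : ℝ) • g'' t ∂μ = ∫ t in (0:ℝ)..1, (1 - t) • g'' t := by
      rw [hμdef, integral_withDensity_eq_integral_smul hρmeas,
        MeasureTheory.setIntegral_congr_fun measurableSet_Icc heqon,
        MeasureTheory.integral_Icc_eq_integral_Ioc, ← intervalIntegral.integral_of_le zero_le_one]
    have hmem : ∫ t, (1/2 : ℝ) • g'' t ∂μ ∈ convexHull ℝ K :=
      (convex_convexHull ℝ K).integral_mem hD.isClosed hmem_ae hint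
    rw [hI]
    exact Set.add_mem_add rfl (hDC (hIeq ▸ hmem))
  refine ⟨main, fun hsub y hy => ?_⟩
  obtain ⟨u, hu, rfl⟩ := hy
  obtain ⟨a, ha, b, hb, hab⟩ := Set.mem_add.1 (main u hu)
  apply hsub
  rw [← hab]
  exact Set.add_mem_add ⟨u, hu, (Set.mem_singleton_iff.1 ha)⟩ hb
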